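/- Let r ≥ 1 be an integer and a, b nonnegative integers. Set M = (r-1)a + b. Then r(r-1)a² + rb² - r·min(a,b) ≥ M(M-1). -/
import Mathlib

theorem stmt0 (r a b : ℤ) (hr : 1 ≤ r) (ha : 0 ≤ a) (hb : 0 ≤ b) :
    r * (r - 1) * a ^ 2 + r * b ^ 2 - r * min a b ≥
      ((r - 1) * a + b) * (((r - 1) * a + b) - 1) := by
  rcases le_total a b with h | h
  · rw [min_eq_left h]
    nlinarith [sq_nonneg (a - b), mul_nonneg (sub_nonneg.2 hr) (sq_nonneg (a - b))]
  · rw [min_eq_right h]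
    nlinarith [mul_nonneg (sub_nonneg.2 hr) (sq_nonneg (a - b)),
      mul_nonneg (sub_nonneg.2 hr) (sub_nonneg.2 h)]
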